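/- Let p be prime and L = X^{p^{n'}} - (a_ℓ X^{p^ℓ} + ... + a_0 X) a linearized polynomial over F_{p^n} with 1 ≤ ℓ < n' and a_ℓ ≠ 0. If L splits completely over F_{p^n}, then n ≥ n' + (n'-ℓ)·⌊(n'-1)/ℓ⌋. -/

import Mathlib

open Finset


inductive MyT (n' ℓ : ℕ) : ℕ → Prop
  | zero : MyT n' ℓ 0
  | add (t s : ℕ) : MyT n' ℓ t → n' - ℓ ≤ s → s ≤ n' → MyT n' ℓ (t + s)

noncomputable def myB {K : Type*} [Field K] (p n n' ℓ : ℕ) (a : ℕ → K) : ℕ → K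
  | 0 => 1
  | (t+1) =>
    ∑ i ∈ Finset.range (ℓ+1),
      if h : n' - i ≤ t + 1 ∧ 1 ≤ n' - i then
        a i ^ p ^ (n - i - (t+1)) * myB p n n' ℓ a (t + 1 - (n' - i))
      else 0
  decreasing_by exact Nat.sub_lt (Nat.succ_pos _) h.2

lemma myT_bound {n' ℓ t : ℕ} (h : MyT n' ℓ t) : ∃ u, u * (n' - ℓ) ≤ t ∧ t ≤ u * n' := by
  induction h with
  | zero => exact ⟨0, by simp, by simp⟩
  | add t s _ hs1 hs2 ih =>
    obtain ⟨u, h1, h2⟩ := ih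
    exact ⟨u + 1, by nlinarith, by nlinarith⟩

lemma myB_eq_zero {K : Type*} [Field K] (p n n' ℓ : ℕ) (a : ℕ → K) (hn' : ℓ < n') :
    ∀ t, ¬ MyT n' ℓ t → myB p n n' ℓ a t = 0 := by
  intro t
  induction t using Nat.strong_induction_on with
  | _ t ih =>
    intro hT
    match t with
    | 0 => exact absurd MyT.zero hT
    | t + 1 =>
      rw [myB]
      refine Finset.sum_eq_zero fun i hi => ?_
      rw [Finset.mem_range] at hi
      split_ifs with h
      · rcases h with ⟨h1, h2⟩
        have hlt : t + 1 - (n' - i) < t + 1 := Nat.sub_lt (Nat.succ_pos _) h2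
        rw [ih _ hlt, mul_zero]
        intro hT'
        have := MyT.add _ (n' - i) hT' (by omega) (by omega)
        rw [Nat.sub_add_cancel h1] at this
        exact hT this
      · rfl

lemma myB_ne_zero {K : Type*} [Field K] (p n n' ℓ : ℕ) (a : ℕ → K) (hℓ : 1 ≤ ℓ) (hn' : ℓ < n')
    (ha : a ℓ ≠ 0) : ∀ t, t * ℓ < n' → myB p n n' ℓ a (t * (n' - ℓ)) ≠ 0 := by
  intro t
  induction t with
  | zero => intro _; simp [myB]
  | succ t ih =>
    intro ht
    have ihne : myB p n n' ℓ a (t * (n' - ℓ)) ≠ 0 := ih (by nlinarith)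
    have hv : 1 ≤ n' - ℓ := by omega
    have hpos : 0 < (t + 1) * (n' - ℓ) := Nat.mul_pos t.succ_pos (by omega)
    obtain ⟨T, hT⟩ : ∃ T, (t + 1) * (n' - ℓ) = T + 1 := ⟨(t+1)*(n'-ℓ) - 1, by omega⟩
    rw [hT, myB, ← hT]
    rw [Finset.sum_eq_single_of_mem ℓ (Finset.self_mem_range_succ ℓ)]
    · rw [dif_pos ⟨by nlinarith [Nat.succ_mul t (n' - ℓ)], hv⟩]
      have : (t + 1) * (n' - ℓ) - (n' - ℓ) = t * (n' - ℓ) := by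
        rw [Nat.succ_mul, Nat.add_sub_cancel]
      rw [this]
      exact mul_ne_zero (pow_ne_zero _ ha) ihne
    · intro i hi hne
      rw [Finset.mem_range] at hi
      have hiℓ : i < ℓ := by omega
      split_ifs with h
      · rcases h with ⟨h1, h2⟩
        rw [myB_eq_zero p n n' ℓ a hn', mul_zero]
        intro hT'
        obtain ⟨u, hu1, hu2⟩ := myT_bound hT'
        -- e := (t+1)*(n'-ℓ) - (n'-i), with n'-i ≤ (t+1)*(n'-ℓ)
        set e := (t + 1) * (n' - ℓ) - (n' - i) with he
        have hes : e + (n' - i) = (t + 1) * (n' - ℓ) := by omega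
        -- n' - i ≥ n' - ℓ + 1
        have hsi : n' - ℓ + 1 ≤ n' - i := by omega
        have helt : e < t * (n' - ℓ) := by nlinarith [Nat.succ_mul t (n' - ℓ)]
        have hut : u < t := by
          by_contra hut
          push_neg at hut
          have : t * (n' - ℓ) ≤ u * (n' - ℓ) := Nat.mul_le_mul_right _ hut
          omega
        have h3 : e ≤ (t - 1) * n' := le_trans hu2 (Nat.mul_le_mul_right _ (by omega))
        have h4 : (t + 1) * (n' - ℓ) ≤ e + n' := by omega
        -- contradiction: (t+1)*(n'-ℓ) ≤ (t-1)*n' + n' = t*n', but (t+1)*(n'-ℓ) > t*n' since (t+1)*ℓ < n'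
        have h5 : t * n' < (t + 1) * (n' - ℓ) := by
          have : (t + 1) * (n' - ℓ) + (t + 1) * ℓ = (t + 1) * n' := by
            rw [← Nat.mul_add]; congr 1; omega
          nlinarith
        have ht1 : 1 ≤ t := by omega
        nlinarith [Nat.sub_add_cancel ht1]
      · rfl


theorem stmt_4 (p n n' ℓ : ℕ) [Fact p.Prime] (hn : 0 < n) (hℓ : 1 ≤ ℓ) (hn' : ℓ < n')
    (a : ℕ → GaloisField p n) (ha : a ℓ ≠ 0)
    (L : Polynomial (GaloisField p n))
    (hL : L = Polynomial.X ^ (p ^ n') -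
      ∑ i ∈ Finset.range (ℓ + 1), Polynomial.C (a i) * Polynomial.X ^ (p ^ i))
    (hroots : {x : GaloisField p n | Polynomial.eval x L = 0}.ncard = p ^ n') :
    n ≥ n' + (n' - ℓ) * ((n' - 1) / ℓ) := by
  classical
  have hp : 2 ≤ p := (Fact.out : p.Prime).two_le
  haveI : Fintype (GaloisField p n) := Fintype.ofFinite _
  set S := {x : GaloisField p n | Polynomial.eval x L = 0} with hS
  have hcard : Nat.card (GaloisField p n) = p ^ n := GaloisField.card p n hn.ne'
  have hcard' : Fintype.card (GaloisField p n) = p ^ n := by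
    rw [← hcard]; exact (Nat.card_eq_fintype_card).symm
  -- n' ≤ n
  have hn'n : n' ≤ n := by
    have h1 : S.ncard ≤ p ^ n := by
      calc S.ncard ≤ (Set.univ : Set (GaloisField p n)).ncard :=
            Set.ncard_le_ncard (Set.subset_univ _) Set.finite_univ
        _ = p ^ n := by rw [Set.ncard_univ, hcard]
    rw [hroots] at h1
    exact (Nat.pow_le_pow_iff_right hp).mp h1
  -- every root satisfies the basic equation and pow_card
  have hroot_eq : ∀ x ∈ S, x ^ p ^ n' = ∑ i ∈ Finset.range (ℓ + 1), a i * x ^ p ^ i := by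
    intro x hx
    have : Polynomial.eval x L = 0 := hx
    rw [hL] at this
    rw [Polynomial.eval_sub, Polynomial.eval_finset_sum, sub_eq_zero, Polynomial.eval_pow,
      Polynomial.eval_X] at this
    rw [this]
    exact Finset.sum_congr rfl fun i _ => by
      rw [Polynomial.eval_mul, Polynomial.eval_C, Polynomial.eval_pow, Polynomial.eval_X]
  have hxn : ∀ x : GaloisField p n, x ^ p ^ n = x := by
    intro x; rw [← hcard']; exact FiniteField.pow_card x
  -- the coefficient sequence
  set d := n - n' with hd
  set b : ℕ → GaloisField p n := fun j => if j ≤ d then myB p n n' ℓ a (d - j) else 0 with hb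
  set c : ℕ → GaloisField p n := fun m =>
    ∑ i ∈ (Finset.range (ℓ+1)).filter (· ≤ m), a i ^ p ^ (m - i) * b (m - i) with hc
  have hbd : b d = 1 := by simp [hb, myB]
  have hbgt : ∀ j, d < j → b j = 0 := by
    intro j hj; simp only [hb]; rw [if_neg (by omega)]
  have hrec : ∀ j, j < d → b j = ∑ i ∈ Finset.range (ℓ+1),
      a i ^ p ^ (n' + j - i) * b (n' + j - i) := by
    intro j hj
    have h1 : b j = myB p n n' ℓ a (d - j) := by simp [hb, le_of_lt hj]
    obtain ⟨T, hT⟩ : ∃ T, d - j = T + 1 := ⟨d - j - 1, by omega⟩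
    rw [h1, hT, myB, ← hT]
    refine Finset.sum_congr rfl fun i hi => ?_
    rw [Finset.mem_range] at hi
    have hi' : i ≤ ℓ := by omega
    by_cases hcase : n' + j - i ≤ d
    · rw [dif_pos ⟨by omega, by omega⟩]
      have e1 : n - i - (d - j) = n' + j - i := by omega
      have e2 : d - j - (n' - i) = d - (n' + j - i) := by omega
      rw [e1, e2]
      congr 1
      simp only [hb]
      rw [if_pos hcase]
    · rw [dif_neg (by omega)]
      have hz : b (n' + j - i) = 0 := by simp only [hb]; rw [if_neg (by omega)]
      rw [hz, mul_zero]
  -- key identity satisfied by every root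
  have key : ∀ x ∈ S, x = ∑ m ∈ Finset.range n', c m * x ^ p ^ m := by
    intro x hx
    have hx1 := hroot_eq x hx
    have e2 : ∀ j : ℕ, (∑ i ∈ Finset.range (ℓ+1), a i * x ^ p ^ i) ^ p ^ j
        = ∑ i ∈ Finset.range (ℓ+1), a i ^ p ^ j * x ^ p ^ (i + j) := by
      intro j
      have hmap := map_sum (iterateFrobenius (GaloisField p n) p j)
        (fun i => a i * x ^ p ^ i) (Finset.range (ℓ+1))
      rw [iterateFrobenius_def] at hmap
      rw [hmap]
      refine Finset.sum_congr rfl fun i _ => ?_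
      rw [iterateFrobenius_def, mul_pow, ← pow_mul, ← pow_add]
  -- main computation
    have main : x + ∑ m ∈ Finset.Ico n' n, c m * x ^ p ^ m
        = ∑ m ∈ Finset.range n, c m * x ^ p ^ m := by
      calc x + ∑ m ∈ Finset.Ico n' n, c m * x ^ p ^ m
          = ∑ j ∈ Finset.range (d+1), b j * x ^ p ^ (n' + j) := ?_
        _ = ∑ j ∈ Finset.range (d+1), b j * (x ^ p ^ n') ^ p ^ j := by
            refine Finset.sum_congr rfl fun j _ => ?_
            rw [← pow_mul, ← pow_add]
        _ = ∑ j ∈ Finset.range (d+1), b j *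
              (∑ i ∈ Finset.range (ℓ+1), a i * x ^ p ^ i) ^ p ^ j := by rw [hx1]
        _ = ∑ j ∈ Finset.range (d+1), ∑ i ∈ Finset.range (ℓ+1),
              a i ^ p ^ j * b j * x ^ p ^ (i + j) := by
            refine Finset.sum_congr rfl fun j _ => ?_
            rw [e2, Finset.mul_sum]
            exact Finset.sum_congr rfl fun i _ => by ring
        _ = ∑ m ∈ Finset.range n, c m * x ^ p ^ m := ?_
      -- first step
      · rw [Finset.sum_range_succ, hbd, one_mul]
        have hnd : n' + d = n := by omega
        rw [hnd, hxn x, Finset.sum_Ico_eq_sum_range]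
        have hnn : n - n' = d := by omega
        rw [hnn, add_comm]
        congr 1
        refine Finset.sum_congr rfl fun j hj => ?_
        rw [Finset.mem_range] at hj
        rw [hrec j hj, Finset.sum_mul]
        have hfil : (Finset.range (ℓ+1)).filter (· ≤ n' + j) = Finset.range (ℓ+1) :=
          Finset.filter_true_of_mem fun i hi => by
            rw [Finset.mem_range] at hi; omega
        simp only [hc, hfil]
        exact (Finset.sum_mul _ _ _).symm
      -- second step : reindexing
      · rw [Finset.sum_comm]
        have stepA : ∀ i ∈ Finset.range (ℓ+1),
            ∑ j ∈ Finset.range (d+1), a i ^ p ^ j * b j * x ^ p ^ (i + j)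
            = ∑ j ∈ Finset.range (n - i), a i ^ p ^ j * b j * x ^ p ^ (i + j) := by
          intro i hi
          rw [Finset.mem_range] at hi
          refine Finset.sum_subset (Finset.range_subset_range.mpr (by omega)) fun j _ hj => ?_
          rw [Finset.mem_range, not_lt] at hj
          rw [hbgt j (by omega), mul_zero, zero_mul]
        rw [Finset.sum_congr rfl stepA]
        have stepC : ∀ m ∈ Finset.range n, c m * x ^ p ^ m
            = ∑ i ∈ (Finset.range (ℓ+1)).filter (· ≤ m),
              a i ^ p ^ (m - i) * b (m - i) * x ^ p ^ m := by
          intro m _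
          simp only [hc]
          rw [Finset.sum_mul]
        rw [Finset.sum_congr rfl stepC]
        rw [Finset.sum_sigma', Finset.sum_sigma']
        refine Finset.sum_nbij' (fun q => ⟨q.1 + q.2, q.1⟩) (fun q => ⟨q.2, q.1 - q.2⟩)
          ?_ ?_ ?_ ?_ ?_
        · rintro ⟨i, j⟩ hq
          simp only [Finset.mem_sigma, Finset.mem_range, Finset.mem_filter] at hq ⊢
          omega
        · rintro ⟨m, i⟩ hq
          simp only [Finset.mem_sigma, Finset.mem_range, Finset.mem_filter] at hq ⊢
          omega
        · rintro ⟨i, j⟩ hq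
          simp only [Finset.mem_sigma, Finset.mem_range] at hq
          simp only [Sigma.mk.inj_iff, heq_eq_eq, true_and, and_true]
          omega
        · rintro ⟨m, i⟩ hq
          simp only [Finset.mem_sigma, Finset.mem_range, Finset.mem_filter] at hq
          simp only [Sigma.mk.inj_iff, heq_eq_eq, true_and, and_true]
          omega
        · rintro ⟨i, j⟩ hq
          simp only [Nat.add_sub_cancel_left]
    -- cancellation
    have hsplit : ∑ m ∈ Finset.range n, c m * x ^ p ^ m
        = ∑ m ∈ Finset.range n', c m * x ^ p ^ m + ∑ m ∈ Finset.Ico n' n, c m * x ^ p ^ m := by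
      simp only [Finset.range_eq_Ico]
      exact (Finset.sum_Ico_consecutive _ (Nat.zero_le n') hn'n).symm
    rw [hsplit] at main
    exact add_right_cancel main
  -- the low coefficients vanish, by root counting
  have hc0 : ∀ m, 1 ≤ m → m < n' → c m = 0 := by
    intro m hm1 hm2
    by_contra h0
    set R : Polynomial (GaloisField p n) :=
      (∑ k ∈ Finset.range n', Polynomial.C (c k) * Polynomial.X ^ (p ^ k)) - Polynomial.X
      with hR
    have hRne : R ≠ 0 := by
      intro hR0
      have hcoeff : R.coeff (p ^ m) = c m := by
        rw [hR, Polynomial.coeff_sub, Polynomial.finset_sum_coeff]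
        have hne1 : ¬ (p ^ m = 1) := by
          have := Nat.one_lt_pow (n := m) (by omega) (by omega : 1 < p)
          omega
        rw [Polynomial.coeff_X, if_neg (by omega), sub_zero]
        rw [Finset.sum_eq_single m]
        · rw [Polynomial.coeff_C_mul, Polynomial.coeff_X_pow, if_pos rfl, mul_one]
        · intro k _ hkm
          rw [Polynomial.coeff_C_mul, Polynomial.coeff_X_pow, if_neg, mul_zero]
          intro hEq
          exact hkm (Nat.pow_right_injective hp hEq.symm)
        · intro hm
          exact absurd (Finset.mem_range.mpr hm2) hm
      rw [hR0, Polynomial.coeff_zero] at hcoeff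
      exact h0 hcoeff.symm
    have hsub : S ⊆ ↑R.roots.toFinset := by
      intro x hx
      have hkey := key x hx
      refine Finset.mem_coe.mpr ?_
      rw [Multiset.mem_toFinset, Polynomial.mem_roots hRne]
      show Polynomial.eval x R = 0
      rw [hR, Polynomial.eval_sub, Polynomial.eval_finset_sum, Polynomial.eval_X, sub_eq_zero]
      rw [Finset.sum_congr rfl fun k _ => by
        rw [Polynomial.eval_mul, Polynomial.eval_C, Polynomial.eval_pow, Polynomial.eval_X]]
      exact hkey.symm
    have hle : S.ncard ≤ R.natDegree := by
      calc S.ncard ≤ (↑R.roots.toFinset : Set (GaloisField p n)).ncard :=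
            Set.ncard_le_ncard hsub (R.roots.toFinset).finite_toSet
        _ = R.roots.toFinset.card := Set.ncard_coe_finset _
        _ ≤ Multiset.card R.roots := Multiset.toFinset_card_le _
        _ ≤ R.natDegree := Polynomial.card_roots' R
    have hdeg : R.natDegree ≤ p ^ (n' - 1) := by
      rw [hR]
      refine le_trans (Polynomial.natDegree_sub_le _ _) ?_
      rw [sup_le_iff]
      constructor
      · refine le_trans (Polynomial.natDegree_sum_le _ _) ?_
        rw [Finset.fold_max_le]
        refine ⟨Nat.zero_le _, fun k hk => ?_⟩
        rw [Finset.mem_range] at hk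
        refine le_trans (Polynomial.natDegree_C_mul_le _ _) ?_
        rw [Polynomial.natDegree_X_pow]
        exact Nat.pow_le_pow_right (by omega) (by omega)
      · rw [Polynomial.natDegree_X]
        exact Nat.one_le_pow _ _ (by omega)
    have hlt : p ^ (n' - 1) < p ^ n' := Nat.pow_lt_pow_right (by omega) (by omega)
    rw [hroots] at hle
    omega
  -- final contradiction
  by_contra hcon
  push_neg at hcon
  set k := (n' - 1) / ℓ with hk
  have hkl : k * ℓ ≤ n' - 1 := Nat.div_mul_le_self _ _
  set t := d / (n' - ℓ) with ht
  have htd : t * (n' - ℓ) ≤ d := Nat.div_mul_le_self _ _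
  have hmod := Nat.div_add_mod d (n' - ℓ)
  have hmodlt : d % (n' - ℓ) < n' - ℓ := Nat.mod_lt _ (by omega)
  have hcm2 : (n' - ℓ) * (d / (n' - ℓ)) = t * (n' - ℓ) := by rw [← ht, Nat.mul_comm]
  have hjlt : d - t * (n' - ℓ) < n' - ℓ := by omega
  have htk : t < k := by
    have hkc : (n' - ℓ) * k = k * (n' - ℓ) := Nat.mul_comm _ _
    have h2 : t * (n' - ℓ) < k * (n' - ℓ) := by omega
    exact lt_of_mul_lt_mul_right h2 (Nat.zero_le _)
  have htl : (t + 1) * ℓ < n' := by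
    have h3 : (t + 1) * ℓ ≤ k * ℓ := Nat.mul_le_mul_right _ (by omega)
    omega
  set j' := d - t * (n' - ℓ) with hj'
  set m' := j' + ℓ with hm'
  have hcm := hc0 m' (by omega) (by omega)
  have hfil : (Finset.range (ℓ+1)).filter (· ≤ m') = Finset.range (ℓ+1) :=
    Finset.filter_true_of_mem fun i hi => by
      rw [Finset.mem_range] at hi; omega
  simp only [hc, hfil] at hcm
  rw [Finset.sum_eq_single_of_mem ℓ (Finset.self_mem_range_succ _)] at hcm
  · have hml : m' - ℓ = j' := by omega
    rw [hml] at hcm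
    have hbj : b j' = myB p n n' ℓ a (t * (n' - ℓ)) := by
      simp only [hb]
      rw [if_pos (by omega)]
      congr 1
      omega
    have hne : myB p n n' ℓ a (t * (n' - ℓ)) ≠ 0 := by
      refine myB_ne_zero p n n' ℓ a hℓ hn' ha t ?_
      have : t * ℓ ≤ k * ℓ := Nat.mul_le_mul_right _ (by omega)
      omega
    exact absurd hcm (mul_ne_zero (pow_ne_zero _ ha) (by rw [hbj]; exact hne))
  · intro i hi hiℓ'
    rw [Finset.mem_range] at hi
    have hiℓ : i < ℓ := by omega
    by_cases hcase : m' - i ≤ d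
    · have hbv : b (m' - i) = myB p n n' ℓ a (d - (m' - i)) := by
        simp only [hb]; rw [if_pos hcase]
      rw [hbv, myB_eq_zero p n n' ℓ a hn' _ ?_, mul_zero]
      intro hT
      obtain ⟨u, hu1, hu2⟩ := myT_bound hT
      -- e := d - (m' - i); e + (ℓ - i) = t * (n' - ℓ)
      have heq : (d - (m' - i)) + (ℓ - i) = t * (n' - ℓ) := by omega
      have hut : u < t := by
        rcases Nat.lt_or_ge u t with h | h
        · exact h
        · exfalso
          have : t * (n' - ℓ) ≤ u * (n' - ℓ) := Nat.mul_le_mul_right _ h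
          omega
      have h6 : (u + 1) * n' ≤ t * n' := Nat.mul_le_mul_right _ (by omega)
      have h7 : (u + 1) * n' = u * n' + n' := by ring
      have h8 : t * n' = t * (n' - ℓ) + t * ℓ := by
        have : n' - ℓ + ℓ = n' := by omega
        calc t * n' = t * ((n' - ℓ) + ℓ) := by rw [this]
          _ = t * (n' - ℓ) + t * ℓ := by ring
      have h9 : (t + 1) * ℓ = t * ℓ + ℓ := by ring
      omega
    · have hz : b (m' - i) = 0 := by simp only [hb]; rw [if_neg hcase]
      rw [hz, mul_zero]
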